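/- Let a > 0 be an irrational real number, and for an integer k ≥ 4 set N_a(k−2) := min( π²·⌈a·(k−2)/(a+1)⌉²/a² , π²·⌈(k−2)/(a+1)⌉² ) and ĉ_a(k) := (N_a(k−2) − π²·k²/(a+1)²)/k. Then the set of cluster points of the sequence (ĉ_a(k))_{k≥4} is exactly the closed interval [−4π²/(a+1)², −2π²/(a+1)²]. -/

import Mathlib

open Real Filter

private lemma irr_fract {x : ℝ} (h : Irrational x) : Irrational (Int.fract x) := by
  rw [← Int.self_sub_floor]; exact h.sub_intCast _

private lemma fract_pos_of_irr {x : ℝ} (h : Irrational x) : 0 < Int.fract x :=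
  lt_of_le_of_ne (Int.fract_nonneg x) (fun he => (irr_fract h).ne_int 0 (by exact_mod_cast he.symm))

private lemma mcp_iff' {w : ℕ → ℝ} {x : ℝ} :
    MapClusterPt x atTop w ↔ ∀ ε > 0, ∀ M : ℕ, ∃ n, M ≤ n ∧ |w n - x| < ε := by
  rw [mapClusterPt_iff_frequently]
  constructor
  · intro h ε hε M
    have h2 := h (Metric.ball x ε) (Metric.ball_mem_nhds x hε)
    rw [frequently_atTop] at h2
    obtain ⟨n, hn, hmem⟩ := h2 M
    exact ⟨n, hn, by simpa [Real.dist_eq] using hmem⟩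
  · intro h s hs
    obtain ⟨ε, hε, hsub⟩ := Metric.mem_nhds_iff.1 hs
    rw [frequently_atTop]
    intro M
    obtain ⟨n, hn, hlt⟩ := h ε hε M
    exact ⟨n, hn, hsub (by simpa [Real.dist_eq] using hlt)⟩
private lemma pigeon {θ : ℝ} (hθ : Irrational θ) {ε : ℝ} (hε : 0 < ε) :
    ∃ n : ℕ, 1 ≤ n ∧ (Int.fract (n * θ) < ε ∨ 1 - Int.fract (n * θ) < ε) := by
  obtain ⟨K, hK⟩ := exists_nat_gt (1 / ε)
  have hK0 : 0 < (K : ℝ) := lt_trans (by positivity) hK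
  have hKinv : 1 / (K : ℝ) < ε := by
    rw [div_lt_iff₀ hK0]
    calc (1 : ℝ) = ε * (1/ε) := by field_simp
    _ < ε * K := mul_lt_mul_of_pos_left hK hε
  have hKn : 0 < K := by exact_mod_cast hK0
  have hmap : ∀ j : Fin (K + 1), (⌊Int.fract ((j : ℕ) * θ) * K⌋).toNat < K := by
    intro j
    have h1 : Int.fract ((j : ℕ) * θ) * K < K := by
      nlinarith [Int.fract_lt_one ((j : ℕ) * θ), Int.fract_nonneg ((j : ℕ) * θ)]
    have h2 : ⌊Int.fract ((j : ℕ) * θ) * K⌋ < (K : ℤ) := Int.floor_lt.2 (by exact_mod_cast h1)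
    omega
  obtain ⟨i, j, hij, heq⟩ := Fintype.exists_ne_map_eq_of_card_lt
    (fun j : Fin (K + 1) => (⟨(⌊Int.fract ((j : ℕ) * θ) * K⌋).toNat, hmap j⟩ : Fin K))
    (by simp)
  have hne' : (i : ℕ) ≠ (j : ℕ) := fun h => hij (Fin.ext h)
  wlog hlt : (i : ℕ) < (j : ℕ) generalizing i j
  · exact this j i (Ne.symm hij) heq.symm (Ne.symm hne') (by omega)
  have hfl : ⌊Int.fract ((i : ℕ) * θ) * K⌋ = ⌊Int.fract ((j : ℕ) * θ) * K⌋ := by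
    have h1 : 0 ≤ ⌊Int.fract ((i : ℕ) * θ) * K⌋ :=
      Int.floor_nonneg.2 (mul_nonneg (Int.fract_nonneg _) hK0.le)
    have h2 : 0 ≤ ⌊Int.fract ((j : ℕ) * θ) * K⌋ :=
      Int.floor_nonneg.2 (mul_nonneg (Int.fract_nonneg _) hK0.le)
    have h3 := congrArg Fin.val heq
    simp only at h3
    omega
  set xi := Int.fract ((i : ℕ) * θ) with hxi
  set xj := Int.fract ((j : ℕ) * θ) with hxj
  have hd : |xj - xi| < 1 / K := by
    have l1 : (⌊xi * K⌋ : ℝ) ≤ xi * K := Int.floor_le _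
    have l2 : xi * K < ⌊xi * K⌋ + 1 := Int.lt_floor_add_one _
    have l3 : (⌊xj * K⌋ : ℝ) ≤ xj * K := Int.floor_le _
    have l4 : xj * K < ⌊xj * K⌋ + 1 := Int.lt_floor_add_one _
    rw [hfl] at l1 l2
    have habs : |(xj - xi) * K| < 1 := by
      rw [abs_lt]; constructor <;> nlinarith
    calc |xj - xi| = |(xj - xi) * K| / K := by
          rw [abs_mul, abs_of_nonneg hK0.le]; field_simp
    _ < 1 / K := by gcongr
  have hK1 : (1/K : ℝ) ≤ 1 := by
    rw [div_le_one hK0]; exact_mod_cast hKn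
  refine ⟨(j : ℕ) - (i : ℕ), by omega, ?_⟩
  have hcast : (((j : ℕ) - (i : ℕ) : ℕ) : ℝ) = ((j : ℕ) : ℝ) - ((i : ℕ) : ℝ) := by
    push_cast [Nat.cast_sub (le_of_lt hlt)]; ring
  have hsub : (((j : ℕ) - (i : ℕ) : ℕ) : ℝ) * θ
      = (⌊(j : ℕ) * θ⌋ - ⌊(i : ℕ) * θ⌋ : ℤ) + (xj - xi) := by
    rw [hcast]
    push_cast
    rw [hxj, hxi, Int.fract, Int.fract]
    push_cast
    ring
  have hfr : Int.fract ((((j : ℕ) - (i : ℕ) : ℕ) : ℝ) * θ) = Int.fract (xj - xi) := by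
    rw [hsub, Int.fract_intCast_add]
  have hirr' : Irrational ((((j : ℕ) - (i : ℕ) : ℕ) : ℝ) * θ) := hθ.natCast_mul (by omega)
  have hne : xj - xi ≠ 0 := by
    intro h0
    have hz : Int.fract ((((j : ℕ) - (i : ℕ) : ℕ) : ℝ) * θ) = 0 := by
      rw [hfr, h0, Int.fract_zero]
    exact absurd hz (ne_of_gt (fract_pos_of_irr hirr'))
  rcases lt_or_gt_of_ne hne with hneg | hpos
  · right
    have hb : -1 < xj - xi := by have := (abs_lt.1 hd).1; linarith
    have hfl2 : ⌊xj - xi⌋ = -1 := by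
      rw [Int.floor_eq_iff]
      push_cast
      constructor <;> linarith
    have hfr2 : Int.fract (xj - xi) = xj - xi + 1 := by
      rw [Int.fract, hfl2]; push_cast; ring
    rw [hfr, hfr2]
    have := (abs_lt.1 hd).1
    linarith
  · left
    have hb : xj - xi < 1 := by have := (abs_lt.1 hd).2; linarith
    have hfr2 : Int.fract (xj - xi) = xj - xi := Int.fract_eq_self.2 ⟨le_of_lt hpos, hb⟩
    rw [hfr, hfr2]
    have := (abs_lt.1 hd).2
    linarith
private lemma step {δ : ℝ} (hirr : Irrational δ) (h0 : 0 < δ) (h1 : δ < 1)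
    {g : ℝ} (hg0 : 0 ≤ g) (hg1 : g + δ ≤ 1) (M : ℕ) :
    ∃ j : ℕ, M ≤ j ∧ g < Int.fract (j * δ) ∧ Int.fract (j * δ) ≤ g + δ := by
  set c : ℤ := (M : ℤ) + 1 with hc
  set jz : ℤ := ⌊((c : ℝ) + g) / δ⌋ + 1 with hjz
  have hl : ((c : ℝ) + g) / δ < jz := by
    rw [hjz]; push_cast; exact Int.lt_floor_add_one _
  have hl' : (c : ℝ) + g < jz * δ := by
    rw [← div_lt_iff₀ h0]; exact hl
  have hu : (jz : ℝ) * δ ≤ (c : ℝ) + g + δ := by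
    have := Int.floor_le (((c : ℝ) + g) / δ)
    have h2 : ((jz : ℝ) - 1) * δ ≤ (c : ℝ) + g := by
      rw [hjz]; push_cast
      calc (↑⌊((c : ℝ) + g) / δ⌋ + 1 - 1) * δ = ↑⌊((c : ℝ) + g) / δ⌋ * δ := by ring
      _ ≤ (((c : ℝ) + g) / δ) * δ := by gcongr
      _ = (c : ℝ) + g := by field_simp
    nlinarith
  have hcpos : (1 : ℝ) ≤ (c : ℝ) := by
    rw [hc]; push_cast; linarith [Nat.cast_nonneg (α := ℝ) M]
  have hjpos : 0 < jz := by
    by_contra h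
    push_neg at h
    have : (jz : ℝ) * δ ≤ 0 := mul_nonpos_of_nonpos_of_nonneg (by exact_mod_cast h) h0.le
    linarith
  have hjM : (M : ℤ) + 1 < jz := by
    have hjr : (0 : ℝ) < (jz : ℝ) := by exact_mod_cast hjpos
    have h2 : (jz : ℝ) * δ < jz := by nlinarith
    have : ((M : ℤ) + 1 : ℝ) < (jz : ℝ) := by push_cast at h2 hl' ⊢; push_cast [hc] at hl'; linarith
    exact_mod_cast this
  refine ⟨jz.toNat, by omega, ?_, ?_⟩ <;>
  · have hcast : ((jz.toNat : ℕ) : ℝ) = (jz : ℝ) := by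
      exact_mod_cast Int.toNat_of_nonneg hjpos.le
    have hjirr : Irrational ((jz.toNat : ℝ) * δ) := hirr.natCast_mul (by omega)
    have hne1 : (jz : ℝ) * δ ≠ (c : ℝ) + 1 := by
      intro h
      apply hjirr.ne_int (c + 1)
      rw [hcast, h]; push_cast; ring
    have hflr : ⌊(jz.toNat : ℝ) * δ⌋ = c := by
      rw [Int.floor_eq_iff]
      rw [hcast]
      constructor
      · linarith
      · push_cast
        have : (jz : ℝ) * δ ≤ (c : ℝ) + 1 := by linarith
        cases lt_or_eq_of_le this with
        | inl h => linarith
        | inr h => exact absurd h hne1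
    have : Int.fract ((jz.toNat : ℝ) * δ) = (jz : ℝ) * δ - c := by
      rw [Int.fract, hflr, hcast]
    rw [this]
    first
    | linarith
    | linarith
private lemma approx {δ : ℝ} (hirr : Irrational δ) (h0 : 0 < δ) (h1 : δ < 1)
    {t : ℝ} (ht0 : 0 ≤ t) (ht1 : t ≤ 1) (M : ℕ) :
    ∃ j : ℕ, M ≤ j ∧ 0 < Int.fract (j * δ) ∧ |Int.fract (j * δ) - t| ≤ 2 * δ := by
  have hg0 : 0 ≤ min t (1 - δ) := le_min ht0 (by linarith)
  have hg1 : min t (1 - δ) + δ ≤ 1 := by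
    have := min_le_right t (1 - δ); linarith
  obtain ⟨j, hjM, hlo, hhi⟩ := step hirr h0 h1 hg0 hg1 M
  refine ⟨j, hjM, lt_of_le_of_lt hg0 hlo, ?_⟩
  rw [abs_le]
  rcases min_cases t (1 - δ) with ⟨hmeq, hmle⟩ | ⟨hmeq, hmle⟩ <;>
    rw [hmeq] at hlo hhi <;> constructor <;> linarith

private lemma cluster {θ : ℝ} (hθ : Irrational θ) {f : ℝ} (hf0 : 0 ≤ f) (hf1 : f ≤ 1)
    {ε : ℝ} (hε : 0 < ε) (M : ℕ) :
    ∃ n : ℕ, M ≤ n ∧ |Int.fract (((n : ℝ) + 2) * θ) - f| < ε := by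
  obtain ⟨n₀, hn₀, hcase⟩ := pigeon hθ (show (0:ℝ) < ε/2 by linarith)
  have hirr₀ : Irrational ((n₀ : ℝ) * θ) := hθ.natCast_mul (by omega)
  have hfr_pos : 0 < Int.fract ((n₀ : ℝ) * θ) := fract_pos_of_irr hirr₀
  have hfr_lt : Int.fract ((n₀ : ℝ) * θ) < 1 := Int.fract_lt_one _
  rcases hcase with hA | hB
  · -- δ = fract (n₀ θ) small
    set δ := Int.fract ((n₀ : ℝ) * θ) with hδ
    have hirrδ : Irrational δ := irr_fract hirr₀
    obtain ⟨j, hjM, hpos, habs⟩ := approx hirrδ hfr_pos hfr_lt hf0 hf1 (M + 2)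
    have hjn : j ≤ j * n₀ := Nat.le_mul_of_pos_right j (by omega)
    refine ⟨j * n₀ - 2, by omega, ?_⟩
    have h2le : 2 ≤ j * n₀ := by omega
    have hcast : ((j * n₀ - 2 : ℕ) : ℝ) + 2 = ((j * n₀ : ℕ) : ℝ) := by
      push_cast [Nat.cast_sub h2le]; ring
    rw [hcast]
    have hid : ((j * n₀ : ℕ) : ℝ) * θ = ((j * ⌊(n₀ : ℝ) * θ⌋ : ℤ) : ℝ) + (j : ℝ) * δ := by
      rw [hδ, Int.fract]; push_cast; ring
    rw [hid, Int.fract_intCast_add]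
    calc |Int.fract ((j : ℝ) * δ) - f| ≤ 2 * δ := habs
    _ < ε := by linarith
  · -- 1 - fract (n₀ θ) small
    set δ := 1 - Int.fract ((n₀ : ℝ) * θ) with hδ
    have hδ0 : 0 < δ := by linarith
    have hδ1 : δ < 1 := by linarith
    have hirrδ : Irrational δ := by
      have := (irr_fract hirr₀).intCast_sub 1
      rw [hδ]; exact_mod_cast this
    obtain ⟨j, hjM, hpos, habs⟩ := approx hirrδ hδ0 hδ1 (t := 1 - f) (by linarith) (by linarith) (M + 2)
    have hjn : j ≤ j * n₀ := Nat.le_mul_of_pos_right j (by omega)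
    refine ⟨j * n₀ - 2, by omega, ?_⟩
    have h2le : 2 ≤ j * n₀ := by omega
    have hcast : ((j * n₀ - 2 : ℕ) : ℝ) + 2 = ((j * n₀ : ℕ) : ℝ) := by
      push_cast [Nat.cast_sub h2le]; ring
    rw [hcast]
    have hid : ((j * n₀ : ℕ) : ℝ) * θ
        = ((j * (⌊(n₀ : ℝ) * θ⌋ + 1) : ℤ) : ℝ) + (-((j : ℝ) * δ)) := by
      rw [hδ, Int.fract]; push_cast; ring
    rw [hid, Int.fract_intCast_add, Int.fract_neg hpos.ne']
    rw [show 1 - Int.fract ((j : ℝ) * δ) - f = -(Int.fract ((j : ℝ) * δ) - (1 - f)) by ring,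
      abs_neg]
    calc |Int.fract ((j : ℝ) * δ) - (1 - f)| ≤ 2 * δ := habs
    _ < ε := by linarith
private noncomputable def Gg (θ : ℝ) (n : ℕ) : ℝ :=
  min (Int.fract (((n : ℝ) + 2) * θ) / (1 - θ)) ((1 - Int.fract (((n : ℝ) + 2) * θ)) / θ)

private lemma key {a θ : ℝ} (ha : 0 < a) (hθ : θ = 1 / (a + 1)) (hirr : Irrational θ) (n : ℕ) :
    (min (π ^ 2 * ((⌈a * ((n : ℝ) + 2) / (a + 1)⌉ : ℝ)) ^ 2 / a ^ 2)
         (π ^ 2 * ((⌈((n : ℝ) + 2) / (a + 1)⌉ : ℝ)) ^ 2)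
      - π ^ 2 * ((n : ℝ) + 4) ^ 2 / (a + 1) ^ 2) / ((n : ℝ) + 4)
    = 2 * (π ^ 2 * θ ^ 2) * (Gg θ n - 2)
      + (π ^ 2 * θ ^ 2) * (Gg θ n - 2) ^ 2 / ((n : ℝ) + 4) := by
  have ha1 : 0 < a + 1 := by linarith
  have hθ0 : 0 < θ := by rw [hθ]; positivity
  have hθ1 : θ < 1 := by rw [hθ, div_lt_one ha1]; linarith
  have h1θ : 1 - θ = a * θ := by rw [hθ]; field_simp; ring
  have hMθ : Irrational (((n : ℝ) + 2) * θ) := by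
    have h1 : (((n + 2 : ℕ) : ℝ)) = (n : ℝ) + 2 := by push_cast; ring
    have h2 := hirr.natCast_mul (show n + 2 ≠ 0 by omega)
    rwa [h1] at h2
  set M : ℝ := (n : ℝ) + 2 with hM
  set p : ℤ := ⌊M * θ⌋ with hp
  set F : ℝ := Int.fract (M * θ) with hF
  have hFp : F = M * θ - p := (Int.self_sub_floor (M * θ)).symm
  have hF0 : 0 < F := fract_pos_of_irr hMθ
  have hF1 : F < 1 := Int.fract_lt_one _
  have hlow : (p : ℝ) < M * θ := lt_of_le_of_ne (Int.floor_le _) (fun h => hMθ.ne_int p h.symm)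
  have hhigh : M * θ < p + 1 := Int.lt_floor_add_one _
  have ceil2 : ⌈M / (a + 1)⌉ = p + 1 := by
    have hMdiv : M / (a + 1) = M * θ := by rw [hθ]; ring
    rw [hMdiv, Int.ceil_eq_iff]
    constructor
    · push_cast; linarith
    · push_cast; linarith
  have ceil1 : ⌈a * M / (a + 1)⌉ = ((n : ℤ) + 2) - p := by
    have he : a * M / (a + 1) = (((n : ℤ) + 2 : ℤ) : ℝ) + -(M * θ) := by
      rw [hθ, hM]; push_cast; field_simp; ring
    rw [he, add_comm, Int.ceil_add_intCast, Int.ceil_neg, ← hp]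
    ring
  have c1 : ((⌈a * M / (a + 1)⌉ : ℤ) : ℝ) = M - p := by rw [ceil1]; push_cast; rw [hM]
  have c2 : ((⌈M / (a + 1)⌉ : ℤ) : ℝ) = (p : ℝ) + 1 := by rw [ceil2]; push_cast; ring
  rw [c1, c2]
  have hM0 : 0 ≤ M := by rw [hM]; positivity
  set x : ℝ := F / (1 - θ) with hx
  set y : ℝ := (1 - F) / θ with hy
  have hx0 : 0 ≤ x := by rw [hx]; apply div_nonneg hF0.le; linarith
  have hy0 : 0 ≤ y := by rw [hy]; apply div_nonneg (by linarith) hθ0.le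
  have hA : π ^ 2 * (M - (p : ℝ)) ^ 2 / a ^ 2 = π ^ 2 * θ ^ 2 * (M + x) ^ 2 := by
    have e1 : M - (p : ℝ) = a * θ * M + F := by
      rw [show (p : ℝ) = M * θ - F by rw [hFp]; ring]
      linear_combination M * h1θ
    rw [e1, hx, h1θ]
    field_simp
  have hB : π ^ 2 * ((p : ℝ) + 1) ^ 2 = π ^ 2 * θ ^ 2 * (M + y) ^ 2 := by
    rw [show (p : ℝ) = M * θ - F by rw [hFp]; ring, hy]
    field_simp
    ring
  rw [hA, hB]
  have hmin : min (π ^ 2 * θ ^ 2 * (M + x) ^ 2) (π ^ 2 * θ ^ 2 * (M + y) ^ 2)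
      = π ^ 2 * θ ^ 2 * (M + min x y) ^ 2 := by
    rcases le_total x y with h | h
    · rw [min_eq_left h, min_eq_left]
      apply mul_le_mul_of_nonneg_left _ (by positivity)
      apply pow_le_pow_left₀ (by linarith) (by linarith)
    · rw [min_eq_right h, min_eq_right]
      apply mul_le_mul_of_nonneg_left _ (by positivity)
      apply pow_le_pow_left₀ (by linarith) (by linarith)
  rw [hmin]
  have hG : Gg θ n = min x y := by rw [Gg, hx, hy, ← hM, ← hF]
  rw [← hG]
  have hW : π ^ 2 * ((n : ℝ) + 4) ^ 2 / (a + 1) ^ 2 = π ^ 2 * θ ^ 2 * (M + 2) ^ 2 := by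
    rw [hθ, hM]
    field_simp
    ring
  rw [hW]
  have hM2 : M + 2 = (n : ℝ) + 4 := by rw [hM]; ring
  rw [← hM2]
  have hMne : M + 2 ≠ 0 := by rw [hM]; positivity
  field_simp
  ring

set_option maxHeartbeats 1000000 in
/-- Irrational case of the last theorem of Section 6.2 (Dirichlet version):
the cluster points of `(ĉ_a(k))_{k≥4}` form exactly `[−4π²/(a+1)², −2π²/(a+1)²]`. -/
theorem stmt7 (a : ℝ) (ha : 0 < a) (hirr : Irrational a)
    (N chat : ℤ → ℝ)
    (hN : ∀ k : ℤ, N k = min (π ^ 2 * ((⌈a * (k : ℝ) / (a + 1)⌉ : ℝ)) ^ 2 / a ^ 2)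
        (π ^ 2 * ((⌈(k : ℝ) / (a + 1)⌉ : ℝ)) ^ 2))
    (hchat : ∀ k : ℤ, chat k = (N (k - 2) - π ^ 2 * (k : ℝ) ^ 2 / (a + 1) ^ 2) / (k : ℝ)) :
    {x : ℝ | MapClusterPt x atTop (fun n : ℕ => chat ((n : ℤ) + 4))}
      = Set.Icc (-(4 * π ^ 2 / (a + 1) ^ 2)) (-(2 * π ^ 2 / (a + 1) ^ 2)) := by
  have ha1 : 0 < a + 1 := by linarith
  set θ : ℝ := 1 / (a + 1) with hθdef
  have hθirr : Irrational θ := by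
    rw [hθdef, one_div]
    exact Irrational.inv (by simpa using hirr.add_intCast 1)
  have hθ0 : 0 < θ := one_div_pos.2 ha1
  have hθ1 : θ < 1 := by rw [hθdef, div_lt_one ha1]; linarith
  set C : ℝ := π ^ 2 * θ ^ 2 with hC
  have hπ : 0 < π := Real.pi_pos
  have hC0 : 0 < C := by rw [hC]; positivity
  have hkey : ∀ n : ℕ, chat ((n : ℤ) + 4)
      = 2 * C * (Gg θ n - 2) + C * (Gg θ n - 2) ^ 2 / ((n : ℝ) + 4) := by
    intro n
    rw [hchat, hN]
    have e1 : ((((n : ℤ) + 4) - 2 : ℤ) : ℝ) = (n : ℝ) + 2 := by push_cast; ring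
    have e2 : (((n : ℤ) + 4 : ℤ) : ℝ) = (n : ℝ) + 4 := by push_cast; ring
    rw [e1, e2, hC]
    exact key ha hθdef hθirr n
  have hGmem : ∀ n : ℕ, 0 ≤ Gg θ n ∧ Gg θ n ≤ 1 := by
    intro n
    have hf0 := Int.fract_nonneg (((n : ℝ) + 2) * θ)
    have hf1 := Int.fract_lt_one (((n : ℝ) + 2) * θ)
    constructor
    · exact le_min (div_nonneg hf0 (by linarith)) (div_nonneg (by linarith) hθ0.le)
    · rcases le_total (Int.fract (((n : ℝ) + 2) * θ)) (1 - θ) with h | h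
      · apply le_trans (min_le_left _ _)
        rw [div_le_one (by linarith)]; linarith
      · apply le_trans (min_le_right _ _)
        rw [div_le_one hθ0]; linarith
  have hEb : ∀ n : ℕ, 0 ≤ C * (Gg θ n - 2) ^ 2 / ((n : ℝ) + 4)
      ∧ C * (Gg θ n - 2) ^ 2 / ((n : ℝ) + 4) ≤ 4 * C / ((n : ℝ) + 4) := by
    intro n
    obtain ⟨h0, h1⟩ := hGmem n
    have hn4 : (0 : ℝ) < (n : ℝ) + 4 := by positivity
    refine ⟨by positivity, ?_⟩
    rw [div_le_div_iff₀ hn4 hn4]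
    have hsq : (Gg θ n - 2) ^ 2 ≤ 4 := by nlinarith
    nlinarith [mul_le_mul_of_nonneg_right (mul_le_mul_of_nonneg_left hsq hC0.le) hn4.le]
  have hend1 : -(4 * π ^ 2 / (a + 1) ^ 2) = -(4 * C) := by
    rw [hC, hθdef]; field_simp
  have hend2 : -(2 * π ^ 2 / (a + 1) ^ 2) = -(2 * C) := by
    rw [hC, hθdef]; field_simp
  ext x
  simp only [Set.mem_setOf_eq, Set.mem_Icc, hend1, hend2]
  rw [mcp_iff']
  constructor
  · intro hx
    constructor
    · by_contra hcon
      push_neg at hcon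
      obtain ⟨n, -, habs⟩ := hx (-(4 * C) - x) (by linarith) 0
      obtain ⟨hg0, hg1⟩ := hGmem n
      obtain ⟨he0, -⟩ := hEb n
      have hlb : -(4 * C) ≤ chat ((n : ℤ) + 4) := by
        rw [hkey n]; nlinarith
      rw [abs_lt] at habs
      linarith
    · by_contra hcon
      push_neg at hcon
      have hε0 : 0 < (x + 2 * C) / 2 := by linarith
      obtain ⟨N₀, hN₀⟩ := exists_nat_gt (8 * C / ((x + 2 * C) / 2))
      obtain ⟨n, hnge, habs⟩ := hx ((x + 2 * C) / 2) hε0 N₀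
      obtain ⟨hg0, hg1⟩ := hGmem n
      obtain ⟨he0, he1⟩ := hEb n
      have hn4 : (0 : ℝ) < (n : ℝ) + 4 := by positivity
      have hnN : (N₀ : ℝ) ≤ (n : ℝ) := Nat.cast_le.2 hnge
      have hsmall : 4 * C / ((n : ℝ) + 4) < (x + 2 * C) / 2 := by
        rw [div_lt_iff₀ hn4]
        have h8 : 8 * C < ((x + 2 * C) / 2) * ((n : ℝ) + 4) := by
          rw [div_lt_iff₀ hε0] at hN₀
          nlinarith
        nlinarith
      have hub : chat ((n : ℤ) + 4) ≤ -(2 * C) + 4 * C / ((n : ℝ) + 4) := by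
        rw [hkey n]; nlinarith
      rw [abs_lt] at habs
      linarith
  · rintro ⟨hx1, hx2⟩
    intro ε hε M
    set gs : ℝ := x / (2 * C) + 2 with hgs
    have hgs0 : 0 ≤ gs := by
      have h1 : -2 ≤ x / (2 * C) := by rw [le_div_iff₀ (by positivity)]; linarith
      rw [hgs]; linarith
    have hgs1 : gs ≤ 1 := by
      have h1 : x / (2 * C) ≤ -1 := by rw [div_le_iff₀ (by positivity)]; linarith
      rw [hgs]; linarith
    have hxval : x = 2 * C * (gs - 2) := by
      rw [hgs]; field_simp; ring
    set fs : ℝ := gs * (1 - θ) with hfs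
    have hfs0 : 0 ≤ fs := mul_nonneg hgs0 (by linarith)
    have hfs1 : fs ≤ 1 := by
      calc fs = gs * (1 - θ) := hfs
      _ ≤ 1 * 1 := mul_le_mul hgs1 (by linarith) (by linarith) (by linarith)
      _ = 1 := by ring
    set L : ℝ := 1 / (1 - θ) + 1 / θ with hL
    have hL0 : 0 < L := by
      have i1 : 0 < 1 / (1 - θ) := one_div_pos.2 (by linarith)
      have i2 : 0 < 1 / θ := one_div_pos.2 hθ0
      rw [hL]; linarith
    have hδ0 : 0 < ε / 2 / (2 * C * L) := by positivity
    obtain ⟨N₀, hN₀⟩ := exists_nat_gt (8 * C / ε)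
    obtain ⟨n, hnge, hfr⟩ := cluster hθirr hfs0 hfs1 hδ0 (max M N₀)
    refine ⟨n, le_trans (le_max_left _ _) hnge, ?_⟩
    obtain ⟨hg0, hg1⟩ := hGmem n
    obtain ⟨he0, he1⟩ := hEb n
    have hgseq : min (fs / (1 - θ)) ((1 - fs) / θ) = gs := by
      have h1 : fs / (1 - θ) = gs := by
        rw [hfs, mul_div_assoc, div_self (by linarith : (1:ℝ) - θ ≠ 0) , mul_one]
      have h2 : fs / (1 - θ) ≤ (1 - fs) / θ := by
        rw [div_le_div_iff₀ (by linarith) hθ0, hfs]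
        nlinarith [mul_nonneg (by linarith : (0:ℝ) ≤ 1 - θ) (by linarith : (0:ℝ) ≤ 1 - gs)]
      rw [min_eq_left h2, h1]
    have hGdiff : |Gg θ n - gs| ≤ L * |Int.fract (((n : ℝ) + 2) * θ) - fs| := by
      rw [← hgseq, Gg]
      set u1 : ℝ := Int.fract (((n : ℝ) + 2) * θ) with hu1
      have hd0 : 0 ≤ |u1 - fs| := abs_nonneg _
      calc |min (u1 / (1 - θ)) ((1 - u1) / θ) - min (fs / (1 - θ)) ((1 - fs) / θ)|
          ≤ max |u1 / (1 - θ) - fs / (1 - θ)| |(1 - u1) / θ - (1 - fs) / θ| :=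
            abs_min_sub_min_le_max _ _ _ _
        _ ≤ L * |u1 - fs| := by
            have e1 : |u1 / (1 - θ) - fs / (1 - θ)| = |u1 - fs| / (1 - θ) := by
              rw [div_sub_div_same, abs_div, abs_of_pos (by linarith : (0:ℝ) < 1 - θ)]
            have e2 : |(1 - u1) / θ - (1 - fs) / θ| = |u1 - fs| / θ := by
              rw [div_sub_div_same, abs_div, abs_of_pos hθ0]
              rw [show (1 - u1) - (1 - fs) = -(u1 - fs) by ring, abs_neg]
            have t1 : 0 ≤ |u1 - fs| / θ := div_nonneg hd0 hθ0.le
            have t2 : 0 ≤ |u1 - fs| / (1 - θ) := div_nonneg hd0 (by linarith)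
            have t3 : L * |u1 - fs| = |u1 - fs| / (1 - θ) + |u1 - fs| / θ := by
              rw [hL]; field_simp
            rw [e1, e2, t3]
            exact max_le (by linarith) (by linarith)
    have hGlt : |Gg θ n - gs| < L * (ε / 2 / (2 * C * L)) :=
      lt_of_le_of_lt hGdiff (by exact mul_lt_mul_of_pos_left hfr hL0)
    have hL2 : L * (ε / 2 / (2 * C * L)) = ε / (4 * C) := by
      field_simp; ring
    rw [hL2] at hGlt
    have hnN : (N₀ : ℝ) ≤ (n : ℝ) := Nat.cast_le.2 (le_trans (le_max_right _ _) hnge)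
    have hn4 : (0 : ℝ) < (n : ℝ) + 4 := by positivity
    have hsmall : 4 * C / ((n : ℝ) + 4) < ε / 2 := by
      rw [div_lt_iff₀ hn4]
      rw [div_lt_iff₀ hε] at hN₀
      nlinarith
    have habs1 : |2 * C * (Gg θ n - gs)| = 2 * C * |Gg θ n - gs| := by
      rw [abs_mul, abs_of_pos (by positivity : (0:ℝ) < 2 * C)]
    rw [hkey n]
    calc |2 * C * (Gg θ n - 2) + C * (Gg θ n - 2) ^ 2 / ((n : ℝ) + 4) - x|
        = |2 * C * (Gg θ n - gs) + C * (Gg θ n - 2) ^ 2 / ((n : ℝ) + 4)| := by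
          rw [hxval]; ring_nf
      _ ≤ |2 * C * (Gg θ n - gs)| + |C * (Gg θ n - 2) ^ 2 / ((n : ℝ) + 4)| := abs_add_le _ _
      _ = 2 * C * |Gg θ n - gs| + C * (Gg θ n - 2) ^ 2 / ((n : ℝ) + 4) := by
          rw [habs1, abs_of_nonneg he0]
      _ < ε := by
          have h1 : 2 * C * |Gg θ n - gs| < 2 * C * (ε / (4 * C)) :=
            mul_lt_mul_of_pos_left hGlt (by positivity)
          have h2 : 2 * C * (ε / (4 * C)) = ε / 2 := by field_simp; ring
          linarith
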